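/- arXiv:1909.04439 — 2 statements merged into one kernel-verified Lean document; each statement's English description precedes it below -/
import Mathlib

section
/- Let x be a C¹ solution of the first-order singular Cucker–Smale system and let i ≠ j be indices with x_i(0) < x_j(0) and ν_i = ν_j. Then the i-th and j-th particles collide in finite time and stick together afterwards: there exists t_c ∈ (0, ∞) with x_i(t_c) = x_j(t_c), and x_i(t) = x_j(t) for every t ≥ t_c. -/
open Real Filter Set

/-- The interaction function `Ψ(x) = sign(x)·|x|^{1−β}/(1−β)`. -/
noncomputable def psiCS (β y : ℝ) : ℝ := Real.sign y * |y| ^ (1 - β) / (1 - β)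

/-- A C¹ solution on `[0,∞)` of the first-order singular Cucker–Smale system:
`x_i'(t) = ν_i + (κ/N) Σ_k Ψ(x_k(t) − x_i(t))`. -/
def IsCSSol (N : ℕ) (β κ : ℝ) (ν : Fin N → ℝ) (x : ℝ → Fin N → ℝ) : Prop :=
  (∀ i, ContDiffOn ℝ 1 (fun t => x t i) (Set.Ici 0)) ∧
  ∀ i, ∀ t ≥ (0:ℝ), HasDerivWithinAt (fun s => x s i)
    (ν i + (κ / (N:ℝ)) * ∑ k, psiCS β (x t k - x t i)) (Set.Ici 0) t

lemma psiCS_zero (β : ℝ) : psiCS β 0 = 0 := by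
  simp [psiCS]

lemma psiCS_neg (β y : ℝ) : psiCS β (-y) = - psiCS β y := by
  simp [psiCS, Real.sign_neg, neg_div, neg_mul]

lemma psiCS_of_nonneg {β y : ℝ} (hβ : β < 1) (hy : 0 ≤ y) :
    psiCS β y = y ^ (1 - β) / (1 - β) := by
  rcases eq_or_lt_of_le hy with h | h
  · simp [psiCS, ← h, Real.zero_rpow (by linarith : (1:ℝ) - β ≠ 0)]
  · simp [psiCS, Real.sign_of_pos h, abs_of_pos h]

lemma psiCS_nonneg {β y : ℝ} (hβ : β < 1) (hy : 0 ≤ y) : 0 ≤ psiCS β y := by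
  rw [psiCS_of_nonneg hβ hy]
  exact div_nonneg (Real.rpow_nonneg hy _) (by linarith)

lemma psiCS_mono {β : ℝ} (hβ : β < 1) : Monotone (psiCS β) := by
  have key : ∀ a b : ℝ, 0 ≤ a → a ≤ b → psiCS β a ≤ psiCS β b := by
    intro a b ha hab
    rw [psiCS_of_nonneg hβ ha, psiCS_of_nonneg hβ (ha.trans hab)]
    have h1 : (0:ℝ) < 1 - β := by linarith
    gcongr
    all_goals first
      | exact Real.rpow_le_rpow ha hab h1.le
      | linarith
  intro a b hab
  rcases le_total 0 a with ha | ha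
  · exact key a b ha hab
  · rcases le_total 0 b with hb | hb
    · have h1 : psiCS β (-a) ≥ 0 := psiCS_nonneg hβ (neg_nonneg.2 ha)
      rw [psiCS_neg] at h1
      have h2 := psiCS_nonneg hβ hb
      linarith
    · have := key (-b) (-a) (neg_nonneg.2 hb) (by linarith)
      rw [psiCS_neg, psiCS_neg] at this
      linarith

lemma cs_diff_deriv {N : ℕ} {β κ : ℝ} {ν : Fin N → ℝ} {x : ℝ → Fin N → ℝ}
    (hx : IsCSSol N β κ ν x) {i j : Fin N} (hν : ν i = ν j) {t : ℝ} (ht : 0 ≤ t) :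
    HasDerivWithinAt (fun s => x s j - x s i)
      ((κ / (N:ℝ)) * ((∑ k, psiCS β (x t k - x t j)) - ∑ k, psiCS β (x t k - x t i)))
      (Set.Ici 0) t := by
  have h := (hx.2 j t ht).sub (hx.2 i t ht)
  refine h.congr_deriv ?_
  rw [hν]; ring

lemma cs_sum_bound {N : ℕ} {β : ℝ} (hβ : β < 1) (f : Fin N → ℝ) {i j : Fin N}
    (hij : i ≠ j) (hlt : f i < f j) :
    (∑ k, psiCS β (f k - f j)) - ∑ k, psiCS β (f k - f i)
      ≤ -2 * psiCS β (f j - f i) := by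
  rw [← Finset.sum_sub_distrib]
  have hterm : ∀ k : Fin N, psiCS β (f k - f j) - psiCS β (f k - f i) ≤ 0 := fun k =>
    sub_nonpos.2 (psiCS_mono hβ (by linarith))
  have hsub : ({i, j} : Finset (Fin N)) ⊆ Finset.univ := Finset.subset_univ _
  have hpair : ∑ k ∈ ({i, j} : Finset (Fin N)),
      (psiCS β (f k - f j) - psiCS β (f k - f i)) = -2 * psiCS β (f j - f i) := by
    rw [Finset.sum_pair hij]
    have h1 : f i - f j = -(f j - f i) := by ring
    rw [h1, psiCS_neg, sub_self, sub_self, psiCS_zero]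
    ring
  have hsplit := Finset.sum_sdiff (f := fun k => psiCS β (f k - f j) - psiCS β (f k - f i)) hsub
  have hneg : ∑ k ∈ Finset.univ \ ({i, j} : Finset (Fin N)),
      (psiCS β (f k - f j) - psiCS β (f k - f i)) ≤ 0 :=
    Finset.sum_nonpos fun k _ => hterm k
  linarith [hsplit, hpair, hneg]

/-- Once the two particles collide, the order `x j ≤ x i` holds forever after. -/
lemma cs_stick {N : ℕ} (hN : 2 ≤ N) {β κ : ℝ} (hβ0 : 0 < β) (hβ1 : β < 1) (hκ : 0 < κ)
    {ν : Fin N → ℝ} {x : ℝ → Fin N → ℝ} (hx : IsCSSol N β κ ν x)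
    {i j : Fin N} (hij : i ≠ j) (hν : ν i = ν j) {s : ℝ} (hs : 0 ≤ s)
    (hcol : x s i = x s j) : ∀ t, s ≤ t → x t j ≤ x t i := by
  intro t hst
  by_contra hlt
  push_neg at hlt
  have hNpos : (0:ℝ) < N := by
    have : (0:ℕ) < N := lt_of_lt_of_le (by norm_num) hN
    exact_mod_cast this
  set d : ℝ → ℝ := fun u => x u j - x u i with hd
  have hdcont : ContinuousOn d (Set.Ici 0) :=
    ((hx.1 j).continuousOn).sub ((hx.1 i).continuousOn)
  have hIcc_sub : Set.Icc s t ⊆ Set.Ici 0 := fun u hu => le_trans hs hu.1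
  set Z : Set ℝ := Set.Icc s t ∩ d ⁻¹' {0} with hZ
  have hZclosed : IsClosed Z :=
    (hdcont.mono hIcc_sub).preimage_isClosed_of_isClosed isClosed_Icc isClosed_singleton
  have hsZ : s ∈ Z := ⟨⟨le_refl s, hst⟩, by simp [hd, hcol]⟩
  have hZbdd : BddAbove Z := ⟨t, fun u hu => hu.1.2⟩
  set σ := sSup Z with hσ
  have hσZ : σ ∈ Z := hZclosed.csSup_mem ⟨s, hsZ⟩ hZbdd
  obtain ⟨⟨hsσ, hσt⟩, hdσ⟩ := hσZ
  simp only [Set.mem_preimage, Set.mem_singleton_iff] at hdσ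
  have hdt : 0 < d t := sub_pos.2 hlt
  have hσlt : σ < t := by
    rcases lt_or_eq_of_le hσt with h | h
    · exact h
    · exfalso; rw [h] at hdσ; rw [hdσ] at hdt; exact lt_irrefl 0 hdt
  have hσ0 : 0 ≤ σ := hs.trans hsσ
  have hpos : ∀ u ∈ Set.Ioc σ t, 0 < d u := by
    intro u hu
    by_contra h
    push_neg at h
    have hcont' : ContinuousOn d (Set.Icc u t) :=
      hdcont.mono (fun v hv => le_trans (hσ0.trans hu.1.le) hv.1)
    have h0mem : (0:ℝ) ∈ d '' Set.Icc u t :=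
      intermediate_value_Icc hu.2 hcont' ⟨h, hdt.le⟩
    obtain ⟨v, hv, hdv⟩ := h0mem
    have hvZ : v ∈ Z := ⟨⟨le_trans (hsσ.trans hu.1.le) hv.1, hv.2⟩, hdv⟩
    have hvσ : v ≤ σ := le_csSup hZbdd hvZ
    have : σ < v := lt_of_lt_of_le hu.1 hv.1
    linarith
  have hderiv : ∀ u ∈ Set.Ioo σ t, HasDerivAt d
      ((κ / (N:ℝ)) * ((∑ k, psiCS β (x u k - x u j)) - ∑ k, psiCS β (x u k - x u i))) u := by
    intro u hu
    have hu0 : 0 < u := lt_of_le_of_lt hσ0 hu.1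
    exact (cs_diff_deriv hx hν hu0.le).hasDerivAt (Ici_mem_nhds hu0)
  have hantit : AntitoneOn d (Set.Icc σ t) := by
    apply antitoneOn_of_deriv_nonpos (convex_Icc σ t)
      (hdcont.mono (fun v hv => hσ0.trans hv.1))
    · intro u hu
      rw [interior_Icc] at hu
      exact (hderiv u hu).differentiableAt.differentiableWithinAt
    · intro u hu
      rw [interior_Icc] at hu
      rw [(hderiv u hu).deriv]
      have hdu : 0 < d u := hpos u ⟨hu.1, hu.2.le⟩
      have hdu' : x u i < x u j := sub_pos.1 hdu
      have hb := cs_sum_bound hβ1 (x u) hij hdu'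
      have hψ : 0 ≤ psiCS β (x u j - x u i) := psiCS_nonneg hβ1 (by linarith)
      have hc' : 0 ≤ κ / (N:ℝ) := (div_pos hκ hNpos).le
      have h2 : (κ / (N:ℝ)) * ((∑ k, psiCS β (x u k - x u j)) - ∑ k, psiCS β (x u k - x u i))
          ≤ (κ / (N:ℝ)) * (-2 * psiCS β (x u j - x u i)) := mul_le_mul_of_nonneg_left hb hc'
      have h3 : (κ / (N:ℝ)) * (-2 * psiCS β (x u j - x u i)) ≤ 0 :=
        mul_nonpos_of_nonneg_of_nonpos hc' (by linarith)
      linarith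
  have hfin := hantit ⟨le_refl σ, hσlt.le⟩ ⟨hσlt.le, le_refl t⟩ hσlt.le
  rw [hdσ] at hfin
  linarith

/-- Finite-time collision. -/
lemma cs_collide {N : ℕ} (hN : 2 ≤ N) {β κ : ℝ} (hβ0 : 0 < β) (hβ1 : β < 1) (hκ : 0 < κ)
    {ν : Fin N → ℝ} {x : ℝ → Fin N → ℝ} (hx : IsCSSol N β κ ν x)
    {i j : Fin N} (hij : i ≠ j) (h0 : x 0 i < x 0 j) (hν : ν i = ν j) :
    ∃ tc : ℝ, 0 < tc ∧ x tc i = x tc j := by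
  have hNpos : (0:ℝ) < N := by
    have : (0:ℕ) < N := lt_of_lt_of_le (by norm_num) hN
    exact_mod_cast this
  have h1β : (0:ℝ) < 1 - β := by linarith
  set d : ℝ → ℝ := fun u => x u j - x u i with hd
  have hdcont : ContinuousOn d (Set.Ici 0) :=
    ((hx.1 j).continuousOn).sub ((hx.1 i).continuousOn)
  have hd0 : 0 < d 0 := sub_pos.2 h0
  set c : ℝ := 2 * κ * β / ((N:ℝ) * (1 - β)) with hc
  have hcpos : 0 < c := by
    apply div_pos (by positivity) (by positivity)
  set T : ℝ := (d 0) ^ β / c + 1 with hT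
  have hTpos : 0 < T := by
    have h : 0 ≤ (d 0) ^ β / c := div_nonneg (Real.rpow_nonneg hd0.le _) hcpos.le
    rw [hT]; linarith
  have hex : ∃ u ∈ Set.Icc (0:ℝ) T, d u ≤ 0 := by
    by_contra hall
    push_neg at hall
    set g : ℝ → ℝ := fun u => (d u) ^ β + c * u with hg
    have hIT : Set.Icc (0:ℝ) T ⊆ Set.Ici 0 := fun v hv => hv.1
    have hganti : AntitoneOn g (Set.Icc 0 T) := by
      apply antitoneOn_of_deriv_nonpos (convex_Icc 0 T)
      · apply ContinuousOn.add
        · exact (hdcont.mono hIT).rpow_const (fun v hv => Or.inl (ne_of_gt (hall v hv)))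
        · exact (continuous_const.mul continuous_id).continuousOn
      · intro u hu
        rw [interior_Icc] at hu
        have hu0 : 0 < u := hu.1
        have hDd := (cs_diff_deriv hx hν hu0.le).hasDerivAt (Ici_mem_nhds hu0)
        have hdu : 0 < d u := hall u ⟨hu.1.le, hu.2.le⟩
        have hg' : HasDerivAt g
            (((κ / (N:ℝ)) * ((∑ k, psiCS β (x u k - x u j)) - ∑ k, psiCS β (x u k - x u i)))
              * β * (d u) ^ (β - 1) + c * 1) u :=
          (hDd.rpow_const (Or.inl (ne_of_gt hdu))).add ((hasDerivAt_id u).const_mul c)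
        exact hg'.differentiableAt.differentiableWithinAt
      · intro u hu
        rw [interior_Icc] at hu
        have hu0 : 0 < u := hu.1
        have hDd := (cs_diff_deriv hx hν hu0.le).hasDerivAt (Ici_mem_nhds hu0)
        have hdu : 0 < d u := hall u ⟨hu.1.le, hu.2.le⟩
        set D : ℝ := (κ / (N:ℝ)) * ((∑ k, psiCS β (x u k - x u j)) - ∑ k, psiCS β (x u k - x u i))
          with hD
        have hg' : HasDerivAt g (D * β * (d u) ^ (β - 1) + c * 1) u :=
          (hDd.rpow_const (Or.inl (ne_of_gt hdu))).add ((hasDerivAt_id u).const_mul c)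
        rw [hg'.deriv]
        have hdu' : x u i < x u j := sub_pos.1 hdu
        have hb := cs_sum_bound hβ1 (x u) hij hdu'
        have hψeq : psiCS β (x u j - x u i) = (d u) ^ (1 - β) / (1 - β) :=
          psiCS_of_nonneg hβ1 (by linarith)
        have hDle : D ≤ -(2 * κ / ((N:ℝ) * (1 - β))) * (d u) ^ (1 - β) := by
          have h2 : D ≤ (κ / (N:ℝ)) * (-2 * psiCS β (x u j - x u i)) := by
            rw [hD]; exact mul_le_mul_of_nonneg_left hb (div_pos hκ hNpos).le
          rw [hψeq] at h2
          calc D ≤ (κ / (N:ℝ)) * (-2 * ((d u) ^ (1 - β) / (1 - β))) := h2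
            _ = -(2 * κ / ((N:ℝ) * (1 - β))) * (d u) ^ (1 - β) := by
                field_simp
        have hpow : (0:ℝ) < (d u) ^ (β - 1) := Real.rpow_pos_of_pos hdu _
        have key : D * β * (d u) ^ (β - 1)
            ≤ (-(2 * κ / ((N:ℝ) * (1 - β))) * (d u) ^ (1 - β)) * β * (d u) ^ (β - 1) := by
          apply mul_le_mul_of_nonneg_right _ hpow.le
          exact mul_le_mul_of_nonneg_right hDle hβ0.le
        have hcancel : (d u) ^ (1 - β) * (d u) ^ (β - 1) = 1 := by
          rw [← Real.rpow_add hdu]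
          norm_num
        have hrhs : (-(2 * κ / ((N:ℝ) * (1 - β))) * (d u) ^ (1 - β)) * β * (d u) ^ (β - 1)
            = -c := by
          have heq : (-(2 * κ / ((N:ℝ) * (1 - β))) * (d u) ^ (1 - β)) * β * (d u) ^ (β - 1)
              = (-(2 * κ / ((N:ℝ) * (1 - β))) * β) * ((d u) ^ (1 - β) * (d u) ^ (β - 1)) := by
            ring
          rw [heq, hcancel, hc]
          ring
        rw [hrhs] at key
        linarith
    have hfin := hganti ⟨le_refl 0, hTpos.le⟩ ⟨hTpos.le, le_refl T⟩ hTpos.le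
    have hdT : 0 < d T := hall T ⟨hTpos.le, le_refl T⟩
    have hgT : 0 < (d T) ^ β := Real.rpow_pos_of_pos hdT β
    have hcT : c * T = (d 0) ^ β + c := by
      rw [hT]
      field_simp
    have hzero : c * (0:ℝ) = 0 := mul_zero c
    simp only [hg] at hfin
    linarith
  obtain ⟨u, hu, hdu⟩ := hex
  have hcont' : ContinuousOn d (Set.Icc 0 u) := hdcont.mono (fun v hv => hv.1)
  have h0mem : (0:ℝ) ∈ d '' Set.Icc 0 u :=
    intermediate_value_Icc' hu.1 hcont' ⟨hdu, hd0.le⟩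
  obtain ⟨tc, htc, hdtc⟩ := h0mem
  refine ⟨tc, ?_, (sub_eq_zero.mp hdtc).symm⟩
  rcases lt_or_eq_of_le htc.1 with h | h
  · exact h
  · exfalso
    rw [← h] at hdtc
    rw [hdtc] at hd0
    exact lt_irrefl 0 hd0

/-- If `ν_i = ν_j` and initially `x_i(0) < x_j(0)`, the two particles collide in finite
time and stick together afterwards. -/
theorem stmt3 (N : ℕ) (hN : 2 ≤ N) (β κ : ℝ) (hβ0 : 0 < β) (hβ1 : β < 1)
    (hκ : 0 < κ) (ν : Fin N → ℝ) (x : ℝ → Fin N → ℝ) (hx : IsCSSol N β κ ν x)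
    (i j : Fin N) (hij : i ≠ j) (h0 : x 0 i < x 0 j) (hν : ν i = ν j) :
    ∃ tc : ℝ, 0 < tc ∧ x tc i = x tc j ∧ ∀ t ≥ tc, x t i = x t j := by
  obtain ⟨tc, htc, hcol⟩ := cs_collide hN hβ0 hβ1 hκ hx hij h0 hν
  refine ⟨tc, htc, hcol, fun t ht => ?_⟩
  have h1 := cs_stick hN hβ0 hβ1 hκ hx hij hν htc.le hcol t ht
  have h2 := cs_stick hN hβ0 hβ1 hκ hx hij.symm hν.symm htc.le hcol.symm t ht
  exact le_antisymm h2 h1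
end

section
/- Let x be a C¹ solution of the first-order singular Cucker–Smale system with strictly increasing natural velocities ν_1 < ν_2 < … < ν_N satisfying Σ_{i=1}^N ν_i = 0 and Σ_{i=1}^N x_i(0) = 0. Then mono-cluster flocking emerges unconditionally with exponential rate: there exist an equilibrium state X^∞ = (x_1^∞, …, x_N^∞) ∈ ℝ^N and a constant C > 0 such that for all i and all t ≥ 0, |x_i(t) − x_i^∞| ≤ C·exp(−κ (C'_{M1})^{−β} t), where C'_{M1} = max{ max_i x_i(0) − min_i x_i(0), ((1−β)(ν_N − ν_1)/κ)^{1/(1−β)} }. -/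
open Real Filter Set Topology

/-- The diameter of a configuration `y : Fin N → ℝ`. -/
noncomputable def diam {N : ℕ} (y : Fin N → ℝ) : ℝ := ⨆ i, ⨆ j, (y i - y j)


section Psi
variable {β : ℝ} (hβ0 : 0 < β) (hβ1 : β < 1)

lemma psi_zero : psiCS β 0 = 0 := by simp [psiCS, Real.sign_zero]

lemma psi_neg (y : ℝ) : psiCS β (-y) = - psiCS β y := by
  simp [psiCS, Real.sign_neg, abs_neg]; ring

include hβ1 in
lemma psi_of_nonneg {y : ℝ} (hy : 0 ≤ y) : psiCS β y = y ^ (1 - β) / (1 - β) := by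
  rcases eq_or_lt_of_le hy with h | h
  · rw [← h, psi_zero, Real.zero_rpow (by linarith), zero_div]
  · rw [psiCS, Real.sign_of_pos h, abs_of_pos h, one_mul]

include hβ0 hβ1 in
lemma psi_one_sided {C y : ℝ} (hC : 0 < C) (hy : 0 ≤ y) (hyC : y ≤ C) :
    C ^ (-β) * y ≤ psiCS β y := by
  rcases eq_or_lt_of_le hy with h | h
  · rw [← h, psi_zero]; simp
  · rw [psi_of_nonneg hβ1 hy]
    have h1 : y ^ (1-β) = y ^ (-β) * y := by
      rw [show (1:ℝ)-β = -β + 1 by ring, Real.rpow_add h, Real.rpow_one]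
    have h2 : C ^ (-β) ≤ y ^ (-β) := Real.rpow_le_rpow_of_nonpos h hyC (by linarith)
    have h3 : C ^ (-β) * y ≤ y ^ (1-β) := by
      rw [h1]; exact mul_le_mul_of_nonneg_right h2 h.le
    have h4 : y ^ (1-β) ≤ y ^ (1-β) / (1-β) := by
      have : (0:ℝ) < 1 - β := by linarith
      rw [le_div_iff₀ this]
      nlinarith [Real.rpow_nonneg h.le (1-β)]
    linarith

include hβ0 hβ1 in
lemma psi_incr_pos {C a b : ℝ} (hC : 0 < C) (hb : 0 ≤ b) (hba : b ≤ a) (haC : a ≤ C) :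
    C ^ (-β) * (a - b) ≤ psiCS β a - psiCS β b := by
  rcases eq_or_lt_of_le hb with h0 | h0
  · rw [← h0, psi_zero, sub_zero, sub_zero]
    exact psi_one_sided hβ0 hβ1 hC (h0 ▸ (hb.trans hba)) haC
  rcases eq_or_lt_of_le hba with h | h
  · rw [h]; simp only [sub_self, mul_zero]; exact le_refl 0
  · -- MVT for y ↦ y ^ (1-β) on [b,a], 0 < b < a
    have hcont : ContinuousOn (fun y : ℝ => y ^ (1-β)) (Icc b a) := by
      intro y hy
      exact (Real.continuousAt_rpow_const y (1-β)
        (Or.inl (lt_of_lt_of_le h0 hy.1).ne')).continuousWithinAt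
    have hderiv : ∀ y ∈ Ioo b a, HasDerivAt (fun y : ℝ => y ^ (1-β))
        ((1-β) * y ^ (1-β-1)) y := by
      intro y hy
      exact Real.hasDerivAt_rpow_const (Or.inl (by nlinarith [hy.1] : (0:ℝ) < y).ne')
    obtain ⟨c, hc, hslope⟩ := exists_hasDerivAt_eq_slope (fun y : ℝ => y ^ (1-β))
      (fun y => (1-β) * y ^ (1-β-1)) h hcont hderiv
    have hc0 : 0 < c := lt_trans h0 hc.1
    have hcC : c ≤ C := le_trans hc.2.le haC
    have hmono : C ^ (-β) ≤ c ^ (-β) := Real.rpow_le_rpow_of_nonpos hc0 hcC (by linarith)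
    have h1β : (0:ℝ) < 1 - β := by linarith
    rw [psi_of_nonneg hβ1 (le_trans hb hba), psi_of_nonneg hβ1 hb]
    have key : a ^ (1-β) - b ^ (1-β) = (1-β) * c ^ (-β) * (a - b) := by
      have he : 1 - β - 1 = -β := by ring
      rw [he] at hslope
      rw [hslope, div_mul_cancel₀ _ (sub_ne_zero.mpr h.ne')]
    rw [div_sub_div_same, key]
    have : (1-β) * c ^ (-β) * (a-b) / (1-β) = c ^ (-β) * (a-b) := by
      field_simp
    rw [this]
    exact mul_le_mul_of_nonneg_right hmono (by linarith)

include hβ0 hβ1 in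
lemma psi_key {C a b : ℝ} (hC : 0 < C) (ha : |a| ≤ C) (hb : |b| ≤ C) (hba : b ≤ a) :
    C ^ (-β) * (a - b) ≤ psiCS β a - psiCS β b := by
  rcases le_or_gt 0 b with h0 | h0
  · exact psi_incr_pos hβ0 hβ1 hC h0 hba (le_of_abs_le ha)
  rcases le_or_gt a 0 with h1 | h1
  · have := psi_incr_pos hβ0 hβ1 hC (by linarith : (0:ℝ) ≤ -a) (by linarith)
      (le_of_abs_le (abs_neg b ▸ hb))
    rw [psi_neg, psi_neg] at this
    linarith
  · have hA := psi_one_sided hβ0 hβ1 hC h1.le (le_of_abs_le ha)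
    have hB := psi_one_sided hβ0 hβ1 hC (by linarith : (0:ℝ) ≤ -b)
      (le_of_abs_le (abs_neg b ▸ hb))
    rw [psi_neg] at hB
    nlinarith

include hβ0 hβ1 in
lemma psi_key_sq {C a b : ℝ} (hC : 0 < C) (ha : |a| ≤ C) (hb : |b| ≤ C) :
    C ^ (-β) * (a - b)^2 ≤ (psiCS β a - psiCS β b) * (a - b) := by
  rcases le_total b a with h | h
  · have := psi_key hβ0 hβ1 hC ha hb h
    nlinarith [sub_nonneg.mpr h]
  · have := psi_key hβ0 hβ1 hC hb ha h
    nlinarith [sub_nonneg.mpr h]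

include hβ0 hβ1 in
lemma psi_subadd {u v : ℝ} (hu : 0 ≤ u) (hv : 0 ≤ v) :
    psiCS β (u + v) ≤ psiCS β u + psiCS β v := by
  have h1β : (0:ℝ) < 1 - β := by linarith
  rcases eq_or_lt_of_le hu with h | h
  · simp [← h, psi_zero]
  rcases eq_or_lt_of_le hv with h' | h'
  · simp [← h', psi_zero]
  have hsum : (0:ℝ) < u + v := by linarith
  rw [psi_of_nonneg hβ1 hsum.le, psi_of_nonneg hβ1 hu, psi_of_nonneg hβ1 hv,
    ← add_div, div_le_div_iff_of_pos_right h1β]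
  have expand : ∀ w : ℝ, 0 < w → w ^ (1-β) = w ^ (-β) * w := by
    intro w hw
    rw [show (1:ℝ)-β = -β + 1 by ring, Real.rpow_add hw, Real.rpow_one]
  rw [expand _ hsum, expand _ h, expand _ h']
  have hu' : (u+v) ^ (-β) ≤ u ^ (-β) :=
    Real.rpow_le_rpow_of_nonpos h (by linarith) (by linarith)
  have hv' : (u+v) ^ (-β) ≤ v ^ (-β) :=
    Real.rpow_le_rpow_of_nonpos h' (by linarith) (by linarith)
  nlinarith


end Psi

section Sol
variable {N : ℕ} {β κ : ℝ} {ν : Fin N → ℝ} {x : ℝ → Fin N → ℝ}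

lemma sum_conserved (hx : IsCSSol N β κ ν x) (hνsum : ∑ i, ν i = 0)
    (hxsum : ∑ i, x 0 i = 0) : ∀ t ≥ (0:ℝ), ∑ i, x t i = 0 := by
  intro t ht
  have key : ∀ u ∈ Icc (0:ℝ) t, (fun s => ∑ i, x s i) u = (fun s => ∑ i, x s i) 0 := by
    apply constant_of_has_deriv_right_zero
    · exact ContinuousOn.mono
        (continuousOn_finset_sum _ (fun i _ => (hx.1 i).continuousOn)) Icc_subset_Ici_self
    · intro u hu
      have h0u : (0:ℝ) ≤ u := hu.1
      have hD : HasDerivWithinAt (fun s => ∑ i, x s i)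
          (∑ i, (ν i + (κ / (N:ℝ)) * ∑ k, psiCS β (x u k - x u i))) (Ici 0) u :=
        HasDerivWithinAt.fun_sum (fun i _ => hx.2 i u h0u)
      have hzero : ∑ i, (ν i + (κ / (N:ℝ)) * ∑ k, psiCS β (x u k - x u i)) = 0 := by
        rw [Finset.sum_add_distrib, hνsum, ← Finset.mul_sum]
        have hS : ∑ i, ∑ k, psiCS β (x u k - x u i) = 0 := by
          have h1 : ∑ i : Fin N, ∑ k : Fin N, psiCS β (x u k - x u i)
              = -∑ i : Fin N, ∑ k : Fin N, psiCS β (x u k - x u i) := by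
            nth_rewrite 2 [Finset.sum_comm]
            rw [← Finset.sum_neg_distrib]
            apply Finset.sum_congr rfl; intro i _
            rw [← Finset.sum_neg_distrib]
            apply Finset.sum_congr rfl; intro k _
            rw [show x u k - x u i = -(x u i - x u k) by ring, psi_neg]
          linarith
        rw [hS]; ring
      rw [hzero] at hD
      exact hD.mono (Ici_subset_Ici.mpr h0u)
  have h2 := key t ⟨ht, le_refl t⟩
  simpa [hxsum] using h2

lemma diam_bdd (hN : 2 ≤ N) (hβ0 : 0 < β) (hβ1 : β < 1) (hκ : 0 < κ)
    (hx : IsCSSol N β κ ν x) {Δ Cm : ℝ} (hΔ : 0 < Δ)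
    (hνΔ : ∀ i j, ν i - ν j ≤ Δ)
    (hCmR : ((1-β) * Δ / κ) ^ (1/(1-β)) ≤ Cm)
    (hCm0 : ∀ i j, x 0 i - x 0 j ≤ Cm) :
    ∀ t ≥ (0:ℝ), ∀ i j, x t i - x t j ≤ Cm := by
  haveI : Nonempty (Fin N) := ⟨⟨0, by omega⟩⟩
  have h1β : (0:ℝ) < 1 - β := by linarith
  set R : ℝ := ((1-β) * Δ / κ) ^ (1/(1-β)) with hR
  have hA : (0:ℝ) < (1-β) * Δ / κ := by positivity
  have hRpos : 0 < R := Real.rpow_pos_of_pos hA _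
  have hpsiR : psiCS β R = Δ / κ := by
    rw [psi_of_nonneg hβ1 hRpos.le, hR, ← Real.rpow_mul hA.le]
    rw [show (1/(1-β)) * (1-β) = 1 by field_simp]
    rw [Real.rpow_one]
    field_simp
  have hN0 : (0:ℝ) < (N:ℝ) := by positivity
  -- main claim with ε
  have main : ∀ ε > (0:ℝ), ∀ t ≥ (0:ℝ), ∀ i j, x t i - x t j < Cm + ε := by
    intro ε hε
    by_contra hcon
    push_neg at hcon
    obtain ⟨t₀, ht₀, i₀, j₀, hij₀⟩ := hcon
    set S : Set ℝ := ⋃ i : Fin N, ⋃ j : Fin N,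
      (Ici (0:ℝ) ∩ (fun t => x t i - x t j) ⁻¹' Ici (Cm + ε)) with hSdef
    have hSclosed : IsClosed S := by
      apply isClosed_iUnion_of_finite; intro i
      apply isClosed_iUnion_of_finite; intro j
      exact ContinuousOn.preimage_isClosed_of_isClosed
        (((hx.1 i).continuousOn).sub ((hx.1 j).continuousOn)) isClosed_Ici isClosed_Ici
    have hSne : S.Nonempty := ⟨t₀, mem_iUnion.mpr ⟨i₀, mem_iUnion.mpr ⟨j₀, ⟨ht₀, hij₀⟩⟩⟩⟩
    have hSbdd : BddBelow S := by
      refine ⟨0, fun u hu => ?_⟩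
      simp only [hSdef, mem_iUnion, mem_inter_iff, mem_Ici, mem_preimage] at hu
      obtain ⟨_, _, h, _⟩ := hu; exact h
    set tS : ℝ := sInf S with htS
    have htSmem : tS ∈ S := hSclosed.csInf_mem hSne hSbdd
    simp only [hSdef, mem_iUnion, mem_inter_iff, mem_Ici, mem_preimage] at htSmem
    obtain ⟨i₁, j₁, htS0, htS1⟩ := htSmem
    -- tS > 0
    have htSpos : 0 < tS := by
      rcases eq_or_lt_of_le htS0 with h | h
      · exfalso
        have h2 := hCm0 i₁ j₁
        rw [← h] at htS1
        linarith
      · exact h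
    -- below tS, strict inequality
    have hbelow : ∀ u, 0 ≤ u → u < tS → ∀ i j, x u i - x u j < Cm + ε := by
      intro u hu hutS i j
      by_contra hc
      push_neg at hc
      have : u ∈ S := mem_iUnion.mpr ⟨i, mem_iUnion.mpr ⟨j, ⟨hu, hc⟩⟩⟩
      have := csInf_le hSbdd this
      linarith [this]
    -- pick max and min at tS
    obtain ⟨i, hi⟩ := Finite.exists_max (fun k => x tS k)
    obtain ⟨j, hj⟩ := Finite.exists_min (fun k => x tS k)
    set D : ℝ := x tS i - x tS j with hD
    have hDge : Cm + ε ≤ D := by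
      have h1 := hi i₁; have h2 := hj j₁
      simp only [hD]; linarith
    have hDpos : 0 < D := by
      have : 0 < Cm + ε := by
        have := hCm0 i₀ i₀; simp at this; linarith
      linarith
    -- derivative of f = x · i - x · j at tS
    set d : ℝ := (ν i + (κ / (N:ℝ)) * ∑ k, psiCS β (x tS k - x tS i))
      - (ν j + (κ / (N:ℝ)) * ∑ k, psiCS β (x tS k - x tS j)) with hd
    have hf : HasDerivAt (fun t => x t i - x t j) d tS := by
      have := (hx.2 i tS htS0).sub (hx.2 j tS htS0)
      exact this.hasDerivAt (Ici_mem_nhds htSpos)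
    -- d ≥ 0 from left minimality
    have hd0 : 0 ≤ d := by
      have hslope := hasDerivAt_iff_tendsto_slope.mp hf
      have hmono : 𝓝[<] tS ≤ 𝓝[≠] tS :=
        nhdsWithin_mono _ (fun u hu => ne_of_lt hu)
      have hslope' : Tendsto (slope (fun t => x t i - x t j) tS) (𝓝[<] tS) (𝓝 d) :=
        hslope.mono_left hmono
      refine ge_of_tendsto hslope' ?_
      filter_upwards [Ioo_mem_nhdsLT_of_mem (⟨htSpos, le_refl tS⟩ : tS ∈ Ioc 0 tS)]
        with u hu
      have hu0 : 0 ≤ u := hu.1.le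
      have huS : u < tS := hu.2
      have hlt := hbelow u hu0 huS i j
      have hnum : (x u i - x u j) - (x tS i - x tS j) < 0 := by
        have h3 : x tS i - x tS j = D := rfl
        linarith [hDge]
      have hden : u - tS < 0 := by linarith
      rw [slope_def_field]
      exact le_of_lt (div_pos_iff.mpr (Or.inr ⟨hnum, hden⟩))
    -- d < 0 from the equation
    have hdneg : d < 0 := by
      have hterm : ∀ k, psiCS β (x tS k - x tS i) - psiCS β (x tS k - x tS j)
          ≤ -psiCS β D := by
        intro k
        have hk1 : 0 ≤ x tS k - x tS j := by have := hj k; linarith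
        have hk2 : 0 ≤ x tS i - x tS k := by have := hi k; linarith
        have hsplit : psiCS β (x tS k - x tS j) + psiCS β (x tS i - x tS k)
            ≥ psiCS β D := by
          have := psi_subadd hβ0 hβ1 hk1 hk2
          rw [show (x tS k - x tS j) + (x tS i - x tS k) = D by rw [hD]; ring] at this
          linarith
        have hodd : psiCS β (x tS k - x tS i) = -psiCS β (x tS i - x tS k) := by
          rw [show x tS k - x tS i = -(x tS i - x tS k) by ring, psi_neg]
        rw [hodd]; linarith
      have hsum : ∑ k, (psiCS β (x tS k - x tS i) - psiCS β (x tS k - x tS j))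
          ≤ (N:ℝ) * (-psiCS β D) := by
        calc ∑ k, (psiCS β (x tS k - x tS i) - psiCS β (x tS k - x tS j))
            ≤ ∑ _k : Fin N, (-psiCS β D) := Finset.sum_le_sum (fun k _ => hterm k)
          _ = (N:ℝ) * (-psiCS β D) := by
              rw [Finset.sum_const, Finset.card_univ, Fintype.card_fin, nsmul_eq_mul]
      -- ψ(D) > Δ/κ
      have hpsiD : Δ / κ < psiCS β D := by
        have hRD : R ≤ D := le_trans hCmR (by linarith)
        have := psi_incr_pos hβ0 hβ1 hDpos hRpos.le hRD (le_refl D)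
        have hpow : (0:ℝ) < D ^ (-β) := Real.rpow_pos_of_pos hDpos _
        have hgap : 0 < D - R := by
          rcases eq_or_lt_of_le hRD with h | h
          · exfalso; rw [← h] at hDge; linarith
          · linarith
        nlinarith [hpsiR]
      have hnu := hνΔ i j
      rw [Finset.sum_sub_distrib] at hsum
      have hd2 : d ≤ Δ - κ * psiCS β D := by
        rw [hd]
        have hNN : (κ / (N:ℝ)) * ((N:ℝ) * (-psiCS β D)) = -(κ * psiCS β D) := by
          field_simp
        nlinarith [mul_le_mul_of_nonneg_left hsum (le_of_lt (by positivity : (0:ℝ) < κ / (N:ℝ)))]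
      have hfin : Δ < psiCS β D * κ := (div_lt_iff₀ hκ).mp hpsiD
      nlinarith [hfin]
    linarith
  -- conclude
  intro t ht i j
  have : ∀ ε > (0:ℝ), x t i - x t j ≤ Cm + ε := fun ε hε => (main ε hε t ht i j).le
  exact le_of_forall_pos_le_add this

end Sol

section Con
variable {N : ℕ} {β κ : ℝ} {ν : Fin N → ℝ} {x : ℝ → Fin N → ℝ}

lemma cont_shift (hx : IsCSSol N β κ ν x) {s : ℝ} (hs : 0 ≤ s) (i : Fin N) :
    ContinuousOn (fun u => x (u + s) i) (Ici 0) := by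
  apply ContinuousOn.comp (hx.1 i).continuousOn
    (Continuous.continuousOn (by continuity))
  intro u hu
  simp only [mem_Ici] at hu ⊢
  linarith

lemma deriv_shift (hx : IsCSSol N β κ ν x) {s : ℝ} (hs : 0 ≤ s) (i : Fin N)
    {t : ℝ} (ht : 0 ≤ t) :
    HasDerivWithinAt (fun u => x (u + s) i)
      (ν i + (κ / (N:ℝ)) * ∑ k, psiCS β (x (t+s) k - x (t+s) i)) (Ici 0) t := by
  have h1 := hx.2 i (t+s) (by linarith)
  have h2 : HasDerivWithinAt (fun u : ℝ => u + s) 1 (Ici 0) t :=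
    ((hasDerivAt_id t).add_const s).hasDerivWithinAt
  have h3 := HasDerivWithinAt.comp t h1 h2
    (fun u hu => by simp only [mem_Ici] at hu ⊢; linarith)
  rw [mul_one] at h3; exact h3

lemma contraction (hN : 2 ≤ N) (hβ0 : 0 < β) (hβ1 : β < 1) (hκ : 0 < κ)
    (hx : IsCSSol N β κ ν x) {Cm : ℝ} (hCmpos : 0 < Cm)
    (hCm : ∀ t ≥ (0:ℝ), ∀ i j, x t i - x t j ≤ Cm)
    (hsum0 : ∀ t ≥ (0:ℝ), ∑ i, x t i = 0)
    {s : ℝ} (hs : 0 ≤ s) :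
    ∀ t ≥ (0:ℝ), ∑ i, (x (t+s) i - x t i)^2 ≤
      (∑ i, (x s i - x 0 i)^2) * Real.exp (-(2 * (κ * Cm ^ (-β))) * t) := by
  haveI : Nonempty (Fin N) := ⟨⟨0, by omega⟩⟩
  have hN0 : (0:ℝ) < (N:ℝ) := by positivity
  set lam : ℝ := κ * Cm ^ (-β) with hlam
  have hlampos : 0 < lam := by
    have := Real.rpow_pos_of_pos hCmpos (-β); positivity
  set L : ℝ → ℝ := fun t => ∑ i, (x (t+s) i - x t i)^2 with hL
  -- derivative of L
  have hLd : ∀ t ≥ (0:ℝ), HasDerivWithinAt L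
      (∑ i, 2 * (x (t+s) i - x t i) *
        ((κ / (N:ℝ)) * ∑ k, (psiCS β (x (t+s) k - x (t+s) i) - psiCS β (x t k - x t i))))
      (Ici 0) t := by
    intro t ht
    have he : ∀ i : Fin N, HasDerivWithinAt (fun u => x (u+s) i - x u i)
        ((ν i + (κ / (N:ℝ)) * ∑ k, psiCS β (x (t+s) k - x (t+s) i)) -
         (ν i + (κ / (N:ℝ)) * ∑ k, psiCS β (x t k - x t i))) (Ici 0) t :=
      fun i => (deriv_shift hx hs i ht).sub (hx.2 i t ht)
    have hsq : ∀ i : Fin N, HasDerivWithinAt (fun u => (x (u+s) i - x u i)^2)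
        (2 * (x (t+s) i - x t i) *
          ((ν i + (κ / (N:ℝ)) * ∑ k, psiCS β (x (t+s) k - x (t+s) i)) -
           (ν i + (κ / (N:ℝ)) * ∑ k, psiCS β (x t k - x t i)))) (Ici 0) t := by
      intro i
      have := (he i).fun_pow 2
      refine this.congr_deriv ?_
      push_cast
      ring
    have hsum := HasDerivWithinAt.fun_sum (fun i (_ : i ∈ Finset.univ) => hsq i)
    refine hsum.congr_deriv ?_
    apply Finset.sum_congr rfl
    intro i _
    rw [Finset.sum_sub_distrib]
    ring
  -- key estimate
  have hkey : ∀ t ≥ (0:ℝ),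
      (∑ i, 2 * (x (t+s) i - x t i) *
        ((κ / (N:ℝ)) * ∑ k, (psiCS β (x (t+s) k - x (t+s) i) - psiCS β (x t k - x t i))))
      ≤ -(2 * lam) * L t := by
    intro t ht
    set a : Fin N → ℝ := x (t+s) with ha
    set b : Fin N → ℝ := x t with hb
    set e : Fin N → ℝ := fun i => a i - b i with he
    set q : Fin N → Fin N → ℝ :=
      fun i k => psiCS β (a k - a i) - psiCS β (b k - b i) with hq
    have hanti : ∀ i k, q k i = -q i k := by
      intro i k
      simp only [hq]
      rw [show a i - a k = -(a k - a i) by ring, show b i - b k = -(b k - b i) by ring,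
        psi_neg, psi_neg]
      ring
    have hesum : ∑ i, e i = 0 := by
      simp only [he, Finset.sum_sub_distrib]
      rw [hsum0 (t+s) (by linarith), hsum0 t ht]
      ring
    set T : ℝ := ∑ i, ∑ k, e i * q i k with hT
    have hswap : ∑ i, ∑ k, e k * q i k = -T := by
      rw [Finset.sum_comm, hT, ← Finset.sum_neg_distrib]
      apply Finset.sum_congr rfl; intro i _
      rw [← Finset.sum_neg_distrib]
      apply Finset.sum_congr rfl; intro k _
      rw [hanti i k]; ring
    have h2T : 2 * T = ∑ i, ∑ k, (e i - e k) * q i k := by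
      have : ∑ i, ∑ k, (e i - e k) * q i k
          = ∑ i, ∑ k, (e i * q i k) - ∑ i, ∑ k, (e k * q i k) := by
        rw [← Finset.sum_sub_distrib]
        apply Finset.sum_congr rfl; intro i _
        rw [← Finset.sum_sub_distrib]
        apply Finset.sum_congr rfl; intro k _
        ring
      rw [this, hswap, hT]; ring
    have hterm : ∀ i k : Fin N, (e i - e k) * q i k ≤ -(Cm ^ (-β)) * (e i - e k)^2 := by
      intro i k
      have habs : ∀ (τ : ℝ), 0 ≤ τ → ∀ i' k' : Fin N, |x τ k' - x τ i'| ≤ Cm := by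
        intro τ hτ i' k'
        rw [abs_le]
        constructor
        · have := hCm τ hτ i' k'; linarith
        · exact hCm τ hτ k' i'
      have h1 := psi_key_sq hβ0 hβ1 hCmpos
        (habs (t+s) (by linarith) i k) (habs t ht i k)
      have hab : (a k - a i) - (b k - b i) = e k - e i := by simp only [he]; ring
      rw [hab] at h1
      have : q i k * (e k - e i) ≥ Cm ^ (-β) * (e k - e i)^2 := h1
      nlinarith [this]
    have hsqsum : ∑ i, ∑ k, (e i - e k)^2 = 2 * (N:ℝ) * L t := by
      have expand : ∀ i : Fin N, ∑ k, (e i - e k)^2 = (N:ℝ) * (e i)^2 + ∑ k, (e k)^2 := by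
        intro i
        have h1 : ∑ k, (e i - e k)^2
            = (∑ k, ((e i)^2 + (e k)^2)) - 2 * e i * ∑ k, e k := by
          rw [Finset.mul_sum, ← Finset.sum_sub_distrib]
          exact Finset.sum_congr rfl (fun k _ => by ring)
        rw [h1, hesum, Finset.sum_add_distrib, Finset.sum_const, Finset.card_univ,
          Fintype.card_fin, nsmul_eq_mul]
        ring
      rw [Finset.sum_congr rfl (fun i _ => expand i), Finset.sum_add_distrib,
        ← Finset.mul_sum, Finset.sum_const, Finset.card_univ, Fintype.card_fin,
        nsmul_eq_mul]
      have hLt : L t = ∑ i, (e i)^2 := by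
        apply Finset.sum_congr rfl; intro i _; simp only [he, ha, hb]
      rw [← hLt]; ring
    have hTle : T ≤ -(Cm ^ (-β)) * (N:ℝ) * L t := by
      have h1 : 2 * T ≤ ∑ i, ∑ k, (-(Cm ^ (-β)) * (e i - e k)^2) := by
        rw [h2T]
        apply Finset.sum_le_sum; intro i _
        apply Finset.sum_le_sum; intro k _
        exact hterm i k
      have h2 : ∑ i, ∑ k, (-(Cm ^ (-β)) * (e i - e k)^2)
          = -(Cm ^ (-β)) * (2 * (N:ℝ) * L t) := by
        rw [← hsqsum]
        simp only [Finset.mul_sum]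
      rw [h2] at h1
      linarith
    have hrewrite : (∑ i, 2 * (x (t+s) i - x t i) *
        ((κ / (N:ℝ)) * ∑ k, (psiCS β (x (t+s) k - x (t+s) i) - psiCS β (x t k - x t i))))
        = (2 * (κ / (N:ℝ))) * T := by
      rw [hT, Finset.mul_sum]
      apply Finset.sum_congr rfl; intro i _
      simp only [Finset.mul_sum]
      apply Finset.sum_congr rfl; intro k _
      simp only [he, ha, hb, hq]
      ring
    rw [hrewrite]
    have hfinal : (2 * (κ / (N:ℝ))) * T ≤ (2 * (κ / (N:ℝ))) * (-(Cm ^ (-β)) * (N:ℝ) * L t) :=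
      mul_le_mul_of_nonneg_left hTle (by positivity)
    have heq : (2 * (κ / (N:ℝ))) * (-(Cm ^ (-β)) * (N:ℝ) * L t) = -(2 * lam) * L t := by
      rw [hlam]; field_simp
    linarith [hfinal, heq ▸ hfinal]
  -- Gronwall via antitone
  have hLcont : ContinuousOn L (Ici 0) := by
    apply continuousOn_finset_sum
    intro i _
    exact ((cont_shift hx hs i).sub (hx.1 i).continuousOn).pow 2
  set G : ℝ → ℝ := fun t => L t * Real.exp (2 * lam * t) with hG
  have hGanti : AntitoneOn G (Ici 0) := by
    apply antitoneOn_of_deriv_nonpos (convex_Ici 0)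
    · exact hLcont.mul (Real.continuous_exp.comp (by continuity)).continuousOn
    · intro t ht
      rw [interior_Ici] at ht
      have hL' := (hLd t (le_of_lt ht)).hasDerivAt (Ici_mem_nhds ht)
      have hE : HasDerivAt (fun u => Real.exp (2 * lam * u))
          (Real.exp (2 * lam * t) * (2 * lam)) t := by
        have := ((hasDerivAt_id t).const_mul (2 * lam)).exp
        simpa using this
      exact (hL'.mul hE).differentiableAt.differentiableWithinAt
    · intro t ht
      rw [interior_Ici] at ht
      have hL' := (hLd t (le_of_lt ht)).hasDerivAt (Ici_mem_nhds ht)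
      have hE : HasDerivAt (fun u => Real.exp (2 * lam * u))
          (Real.exp (2 * lam * t) * (2 * lam)) t := by
        have := ((hasDerivAt_id t).const_mul (2 * lam)).exp
        simpa using this
      have hGd := hL'.mul hE
      rw [show G = (L * fun u => Real.exp (2 * lam * u)) from rfl, hGd.deriv]
      have hk := hkey t (le_of_lt ht)
      have hLnn : 0 ≤ L t := Finset.sum_nonneg (fun i _ => sq_nonneg _)
      have hexp : 0 < Real.exp (2 * lam * t) := Real.exp_pos _
      nlinarith [hk, hLnn, hexp]
  intro t ht
  have h1 : G t ≤ G 0 := hGanti (mem_Ici.mpr le_rfl) (mem_Ici.mpr ht) ht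
  have hG0 : G 0 = L 0 := by simp [hG]
  have hexp : 0 < Real.exp (2 * lam * t) := Real.exp_pos _
  have hL0 : L 0 = ∑ i, (x s i - x 0 i)^2 := by
    apply Finset.sum_congr rfl; intro i _
    rw [zero_add]
  have h2 : L t * Real.exp (2 * lam * t) ≤ L 0 := by rw [← hG0]; exact h1
  have h3 : L t ≤ L 0 * Real.exp (-(2 * lam) * t) := by
    rw [show -(2*lam)*t = -(2*lam*t) by ring, Real.exp_neg, ← div_eq_mul_inv,
      le_div_iff₀ hexp]
    exact h2
  calc (∑ i, (x (t+s) i - x t i)^2) = L t := rfl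
    _ ≤ L 0 * Real.exp (-(2 * lam) * t) := h3
    _ = (∑ i, (x s i - x 0 i)^2) * Real.exp (-(2 * (κ * Cm ^ (-β))) * t) := by
        rw [hL0, hlam]

end Con

/-- Unconditional mono-cluster flocking with exponential rate `κ ψ(C'_{M1})`. -/
theorem stmt7 (N : ℕ) (hN : 2 ≤ N) (β κ : ℝ) (hβ0 : 0 < β) (hβ1 : β < 1)
    (hκ : 0 < κ) (ν : Fin N → ℝ) (x : ℝ → Fin N → ℝ) (hx : IsCSSol N β κ ν x)
    (hν : StrictMono ν) (hνsum : ∑ i, ν i = 0) (hxsum : ∑ i, x 0 i = 0) :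
    ∃ Xinf : Fin N → ℝ, ∃ C > (0:ℝ), ∀ i : Fin N, ∀ t ≥ (0:ℝ),
      |x t i - Xinf i| ≤ C * Real.exp (-(κ *
        (max (diam (x 0))
          (((1 - β) * (ν ⟨N - 1, by omega⟩ - ν ⟨0, by omega⟩) / κ) ^ (1 / (1 - β)))) ^ (-β)) * t) := by
  haveI : Nonempty (Fin N) := ⟨⟨0, by omega⟩⟩
  have hN0 : (0:ℝ) < (N:ℝ) := by positivity
  set Δ : ℝ := ν ⟨N - 1, by omega⟩ - ν ⟨0, by omega⟩ with hΔdef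
  have hΔ : 0 < Δ := by
    have : (⟨0, by omega⟩ : Fin N) < ⟨N - 1, by omega⟩ := by
      rw [Fin.mk_lt_mk]; omega
    have := hν this
    simp only [hΔdef]; linarith
  have hνΔ : ∀ i j, ν i - ν j ≤ Δ := by
    intro i j
    have h1 : ν i ≤ ν ⟨N - 1, by omega⟩ := hν.monotone (by rw [Fin.le_def]; simp; omega)
    have h2 : ν ⟨0, by omega⟩ ≤ ν j := hν.monotone (by rw [Fin.le_def]; simp)
    simp only [hΔdef]; linarith
  set Cm : ℝ := max (diam (x 0)) (((1 - β) * Δ / κ) ^ (1 / (1 - β))) with hCmdef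
  have h1β : (0:ℝ) < 1 - β := by linarith
  have hRpos : 0 < ((1 - β) * Δ / κ) ^ (1 / (1 - β)) :=
    Real.rpow_pos_of_pos (by positivity) _
  have hCmpos : 0 < Cm := lt_of_lt_of_le hRpos (le_max_right _ _)
  have hdiam0 : ∀ i j, x 0 i - x 0 j ≤ diam (x 0) := by
    intro i j
    have hb1 : BddAbove (Set.range fun j => x 0 i - x 0 j) :=
      Set.Finite.bddAbove (Set.finite_range _)
    have hb2 : BddAbove (Set.range fun i => ⨆ j, (x 0 i - x 0 j)) :=
      Set.Finite.bddAbove (Set.finite_range _)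
    calc x 0 i - x 0 j ≤ ⨆ j, (x 0 i - x 0 j) := le_ciSup hb1 j
      _ ≤ diam (x 0) := le_ciSup hb2 i
  have hCm0 : ∀ i j, x 0 i - x 0 j ≤ Cm :=
    fun i j => (hdiam0 i j).trans (le_max_left _ _)
  have hbd : ∀ t ≥ (0:ℝ), ∀ i j, x t i - x t j ≤ Cm :=
    diam_bdd hN hβ0 hβ1 hκ hx hΔ hνΔ (le_max_right _ _) hCm0
  have hsum0 : ∀ t ≥ (0:ℝ), ∑ i, x t i = 0 := sum_conserved hx hνsum hxsum
  have habs : ∀ t ≥ (0:ℝ), ∀ i, |x t i| ≤ Cm := by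
    intro t ht i
    have hexmin : ∃ j, x t j ≤ (0:ℝ) := by
      by_contra h; push_neg at h
      have : 0 < ∑ j, x t j := Finset.sum_pos (fun j _ => h j) Finset.univ_nonempty
      rw [hsum0 t ht] at this; exact lt_irrefl 0 this
    have hexmax : ∃ j, (0:ℝ) ≤ x t j := by
      by_contra h; push_neg at h
      have : ∑ j, x t j < 0 := Finset.sum_neg (fun j _ => h j) Finset.univ_nonempty
      rw [hsum0 t ht] at this; exact lt_irrefl 0 this
    obtain ⟨jm, hjm⟩ := hexmin
    obtain ⟨jM, hjM⟩ := hexmax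
    rw [abs_le]
    constructor
    · have := hbd t ht jM i; linarith
    · have := hbd t ht i jm; linarith
  set lam : ℝ := κ * Cm ^ (-β) with hlam
  have hlampos : 0 < lam := by
    have := Real.rpow_pos_of_pos hCmpos (-β); positivity
  set M : ℝ := 2 * Cm * Real.sqrt N with hM
  have hMpos : 0 < M := by
    have : 0 < Real.sqrt N := Real.sqrt_pos.mpr hN0
    positivity
  have hdecay : ∀ s ≥ (0:ℝ), ∀ t ≥ (0:ℝ), ∀ i,
      |x (t+s) i - x t i| ≤ M * Real.exp (-lam * t) := by
    intro s hs t ht i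
    have hcon := contraction hN hβ0 hβ1 hκ hx hCmpos hbd hsum0 hs t ht
    have h1 : (x (t+s) i - x t i)^2 ≤
        (∑ i, (x s i - x 0 i)^2) * Real.exp (-(2 * lam) * t) := by
      refine le_trans ?_ hcon
      exact Finset.single_le_sum (f := fun i => (x (t+s) i - x t i)^2)
        (fun i _ => sq_nonneg _) (Finset.mem_univ i)
    have h2 : (∑ i, (x s i - x 0 i)^2) ≤ (N:ℝ) * (2 * Cm)^2 := by
      calc (∑ i, (x s i - x 0 i)^2) ≤ ∑ _i : Fin N, (2 * Cm)^2 := by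
            apply Finset.sum_le_sum
            intro i _
            have ha := abs_le.mp (habs s hs i)
            have hb := abs_le.mp (habs 0 le_rfl i)
            apply sq_le_sq' <;> linarith
        _ = (N:ℝ) * (2 * Cm)^2 := by
            rw [Finset.sum_const, Finset.card_univ, Fintype.card_fin, nsmul_eq_mul]
    have h3 : (x (t+s) i - x t i)^2 ≤ (M * Real.exp (-lam * t))^2 := by
      have hsq : (M * Real.exp (-lam * t))^2
          = (N:ℝ) * (2 * Cm)^2 * Real.exp (-(2 * lam) * t) := by
        rw [mul_pow, hM, mul_pow, mul_pow, Real.sq_sqrt hN0.le]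
        rw [show Real.exp (-lam * t) ^ 2 = Real.exp (-lam*t) * Real.exp (-lam*t) by ring,
          ← Real.exp_add, show -lam*t + -lam*t = -(2*lam)*t by ring]
        ring
      rw [hsq]
      refine le_trans h1 ?_
      exact mul_le_mul_of_nonneg_right h2 (Real.exp_pos _).le
    have h4 := Real.sqrt_le_sqrt h3
    rw [Real.sqrt_sq_eq_abs, Real.sqrt_sq (by positivity)] at h4
    exact h4
  have hlim : ∀ i, ∃ c, Tendsto (fun n : ℕ => x n i) atTop (𝓝 c) := by
    intro i
    have hcs : CauchySeq (fun n : ℕ => x n i) := by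
      apply cauchySeq_of_le_geometric (Real.exp (-lam)) M (by
        rw [Real.exp_lt_one_iff]; linarith)
      intro n
      rw [Real.dist_eq]
      have hdn := hdecay 1 zero_le_one (n : ℝ) (Nat.cast_nonneg n) i
      rw [show ((n:ℝ) + 1) = ((n+1 : ℕ):ℝ) by push_cast; ring] at hdn
      rw [abs_sub_comm]
      calc |x (↑(n+1)) i - x (↑n) i| ≤ M * Real.exp (-lam * n) := hdn
        _ = M * Real.exp (-lam) ^ n := by
            rw [← Real.exp_nat_mul]; ring_nf
    exact cauchySeq_tendsto_of_complete hcs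
  choose Xinf hXinf using hlim
  refine ⟨Xinf, M, hMpos, ?_⟩
  intro i t ht
  have htend : Tendsto (fun n : ℕ => |x t i - x n i|) atTop (𝓝 |x t i - Xinf i|) :=
    (tendsto_const_nhds.sub (hXinf i)).abs
  have hfin : |x t i - Xinf i| ≤ M * Real.exp (-lam * t) := by
    apply le_of_tendsto htend
    filter_upwards [eventually_ge_atTop ⌈t⌉₊] with n hn
    have hnt : t ≤ (n:ℝ) := le_trans (Nat.le_ceil t) (Nat.cast_le.mpr hn)
    have hd := hdecay ((n:ℝ) - t) (by linarith) t ht i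
    rw [show t + ((n:ℝ) - t) = (n:ℝ) by ring] at hd
    rw [abs_sub_comm]
    exact hd
  exact hfin
end
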